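/- Let P be a finite set of points in general position in the plane and p ∈ P with depth d(p) ≥ 1 (depth = minimum number of points to delete so that p is on the convex hull boundary of the rest). Then there exists a set M of d(p) segments with pairwise disjoint endpoint sets drawn from P, such that the union of the segments of M is a connected subset of the plane. -/

import Mathlib

open Finset

namespace Stmt13Aux


def cr (z w : ℝ × ℝ) : ℝ := z.1 * w.2 - z.2 * w.1
def dt (z w : ℝ × ℝ) : ℝ := z.1 * w.1 + z.2 * w.2

lemma dt_pos {z : ℝ × ℝ} (h : z ≠ 0) : 0 < dt z z := by
  have h1 : z.1 ≠ 0 ∨ z.2 ≠ 0 := by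
    by_contra hc; push_neg at hc; exact h (Prod.ext hc.1 hc.2)
  simp only [dt]
  rcases h1 with h1 | h1
  · have := mul_self_pos.mpr h1
    nlinarith [mul_self_nonneg z.2]
  · have := mul_self_pos.mpr h1
    nlinarith [mul_self_nonneg z.1]

lemma pos_cancel {a b : ℝ} (ha : 0 < a) (h : 0 < a * b) : 0 < b := by
  by_contra h'
  push_neg at h'
  nlinarith



lemma cr_zero_left (w : ℝ × ℝ) : cr 0 w = 0 := by simp [cr]

lemma cr_self (z : ℝ × ℝ) : cr z z = 0 := by simp [cr]; ring

lemma cr_swap (z w : ℝ × ℝ) : cr w z = - cr z w := by simp [cr]; ring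

/-- if cross product vanishes and x ≠ p then p, x, y are collinear -/
lemma collinear_of_cr {p x y : ℝ × ℝ} (hx : x ≠ p)
    (h : cr (x - p) (y - p) = 0) : Collinear ℝ ({p, x, y} : Set (ℝ × ℝ)) := by
  have hmem : p ∈ ({p, x, y} : Set (ℝ × ℝ)) := by simp
  rw [collinear_iff_of_mem hmem]
  refine ⟨x - p, ?_⟩
  intro q hq
  have hxp : x - p ≠ 0 := sub_ne_zero.mpr hx
  have hd : dt (x - p) (x - p) ≠ 0 := ne_of_gt (dt_pos hxp)
  simp only [Set.mem_insert_iff, Set.mem_singleton_iff] at hq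
  rcases hq with rfl | rfl | rfl
  · exact ⟨0, by simp⟩
  · exact ⟨1, by simp⟩
  · refine ⟨dt (q - p) (x - p) / dt (x - p) (x - p), ?_⟩
    have h1 : (q - p).1 * dt (x - p) (x - p) = dt (q - p) (x - p) * (x - p).1 := by
      simp only [cr, dt] at h ⊢
      linear_combination (-(x - p).2) * h
    have h2 : (q - p).2 * dt (x - p) (x - p) = dt (q - p) (x - p) * (x - p).2 := by
      simp only [cr, dt] at h ⊢
      linear_combination ((x - p).1) * h
    have e1 : q.1 = (dt (q - p) (x - p) / dt (x - p) (x - p)) * (x - p).1 + p.1 := by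
      field_simp
      simp only [Prod.fst_sub] at h1
      simp only [Prod.fst_sub]; linear_combination h1
    have e2 : q.2 = (dt (q - p) (x - p) / dt (x - p) (x - p)) * (x - p).2 + p.2 := by
      field_simp
      simp only [Prod.snd_sub] at h2
      simp only [Prod.snd_sub]; linear_combination h2
    have : q = (dt (q - p) (x - p) / dt (x - p) (x - p)) • (x - p) + p := by
      apply Prod.ext
      · simpa using e1
      · simpa using e2
    simpa using this



lemma seg_meet {p b u v : ℝ × ℝ}
    (hbu : 0 < cr (b - p) (u - p)) (hbv : cr (b - p) (v - p) < 0)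
    (hE : 0 < cr (v - p) (u - p))
    (hu : dt (u - p) (u - p) ≤ dt (b - p) (b - p))
    (hv : dt (v - p) (v - p) ≤ dt (b - p) (b - p)) :
    (segment ℝ u v ∩ segment ℝ p b).Nonempty := by
  have hbp : b - p ≠ 0 := by
    intro h0
    rw [h0] at hbu
    simp [cr] at hbu
  have hdb : 0 < dt (b - p) (b - p) := dt_pos hbp
  set A := cr (b - p) (u - p) with hA
  set B := cr (b - p) (v - p) with hB
  have hAB : 0 < A - B := by linarith
  set t : ℝ := A / (A - B) with ht
  have ht0 : 0 < t := div_pos hbu hAB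
  have ht1 : t < 1 := by
    rw [ht, div_lt_one hAB]; linarith
  set w : ℝ × ℝ := u + t • (v - u) with hw
  have hwseg : w ∈ segment ℝ u v := by
    rw [segment_eq_image']
    exact ⟨t, ⟨le_of_lt ht0, le_of_lt ht1⟩, rfl⟩
  have hcrw : cr (b - p) (w - p) = 0 := by
    have expand : cr (b - p) (w - p) = A + t * (B - A) := by
      simp only [hA, hB, hw, cr, Prod.fst_add, Prod.snd_add, Prod.smul_fst, Prod.smul_snd,
        Prod.fst_sub, Prod.snd_sub, smul_eq_mul]
      ring
    rw [expand]
    have hAB' : t * (A - B) = A := by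
      rw [ht]; field_simp
    linear_combination -hAB'
  set lam : ℝ := dt (w - p) (b - p) / dt (b - p) (b - p) with hlam
  have hwp : w - p = lam • (b - p) := by
    have h1 : (w - p).1 * dt (b - p) (b - p) = dt (w - p) (b - p) * (b - p).1 := by
      simp only [cr] at hcrw
      simp only [dt]
      linear_combination (-(b - p).2) * hcrw
    have h2 : (w - p).2 * dt (b - p) (b - p) = dt (w - p) (b - p) * (b - p).2 := by
      simp only [cr] at hcrw
      simp only [dt]
      linear_combination ((b - p).1) * hcrw
    simp only [Prod.fst_sub, Prod.snd_sub] at h1 h2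
    apply Prod.ext
    · simp only [Prod.smul_fst, smul_eq_mul, hlam, Prod.fst_sub]
      field_simp
      linarith [h1]
    · simp only [Prod.smul_snd, smul_eq_mul, hlam, Prod.snd_sub]
      field_simp
      linarith [h2]
  have hvw : cr (v - p) (w - p) = (1 - t) * cr (v - p) (u - p) := by
    simp only [hw, cr, Prod.fst_add, Prod.snd_add, Prod.smul_fst, Prod.smul_snd,
      Prod.fst_sub, Prod.snd_sub, smul_eq_mul]
    ring
  have hvb : 0 < cr (v - p) (b - p) := by
    have : cr (v - p) (b - p) = - cr (b - p) (v - p) := by simp [cr]; ring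
    rw [this]; linarith
  have hlam0 : 0 ≤ lam := by
    have hpos : 0 < cr (v - p) (w - p) := by
      rw [hvw]
      have : 0 < 1 - t := by linarith
      positivity
    have heq : cr (v - p) (w - p) = lam * cr (v - p) (b - p) := by
      rw [hwp]
      simp only [cr, Prod.smul_fst, Prod.smul_snd, smul_eq_mul]
      ring
    nlinarith [heq]
  have hlam1 : lam ≤ 1 := by
    have key1 : dt (u - p) (b - p) ≤ dt (b - p) (b - p) := by
      simp only [dt] at hu ⊢
      nlinarith [sq_nonneg ((u - p).1 - (b - p).1), sq_nonneg ((u - p).2 - (b - p).2)]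
    have key2 : dt (v - p) (b - p) ≤ dt (b - p) (b - p) := by
      simp only [dt] at hv ⊢
      nlinarith [sq_nonneg ((v - p).1 - (b - p).1), sq_nonneg ((v - p).2 - (b - p).2)]
    have hwb : dt (w - p) (b - p) = (1 - t) * dt (u - p) (b - p) + t * dt (v - p) (b - p) := by
      simp only [hw, dt, Prod.fst_add, Prod.snd_add, Prod.smul_fst, Prod.smul_snd,
        Prod.fst_sub, Prod.snd_sub, smul_eq_mul]
      ring
    have hle : dt (w - p) (b - p) ≤ dt (b - p) (b - p) := by
      rw [hwb]
      nlinarith [ht0, ht1]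
    rw [hlam, div_le_one hdb]
    exact hle
  have hwpb : w ∈ segment ℝ p b := by
    rw [segment_eq_image']
    refine ⟨lam, ⟨hlam0, hlam1⟩, ?_⟩
    show p + lam • (b - p) = w
    rw [← hwp]; abel
  exact ⟨w, hwseg, hwpb⟩



lemma exists_top_segment {α : Type*} [DecidableEq α] (κ : α → ℝ) :
    ∀ (k : ℕ) (S : Finset α), k ≤ S.card → Set.InjOn κ ↑S →
    ∃ T, T ⊆ S ∧ T.card = k ∧ ∀ u ∈ T, ∀ w ∈ S, κ u < κ w → w ∈ T := by
  intro k
  induction k with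
  | zero => exact fun S _ _ => ⟨∅, empty_subset _, rfl, by simp⟩
  | succ n ih =>
    intro S hk hinj
    obtain ⟨T, hTS, hTcard, hTclosed⟩ := ih S (Nat.le_of_succ_le hk) hinj
    have hSd : (S \ T).Nonempty := by
      rw [← card_pos, card_sdiff_of_subset hTS]; omega
    obtain ⟨m, hm, hmax⟩ := Finset.exists_max_image (S \ T) κ hSd
    rw [mem_sdiff] at hm
    refine ⟨insert m T, ?_, ?_, ?_⟩
    · exact insert_subset hm.1 hTS
    · rw [card_insert_of_notMem hm.2, hTcard]
    · intro u hu w hw hlt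
      rcases mem_insert.mp hu with rfl | huT
      · by_cases hwT : w ∈ T
        · exact mem_insert_of_mem hwT
        · have : κ w ≤ κ u := hmax w (mem_sdiff.mpr ⟨hw, hwT⟩)
          linarith
      · exact mem_insert_of_mem (hTclosed u huT w hw hlt)

lemma exists_matching {α : Type*} [DecidableEq α] (κ : α → ℝ) (E : α → α → Prop)
    [∀ u, DecidablePred (E u)] :
    ∀ (k m : ℕ) (L R : Finset α), k ≤ m → L.card = k → Set.InjOn κ ↑L →
    (∀ u ∈ L, m ≤ (L.filter (fun w => κ u < κ w)).card + (R.filter (fun v => E u v)).card) →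
    ∃ F : Finset (α × α), F.card = k ∧
      (∀ s ∈ F, s.1 ∈ L ∧ s.2 ∈ R ∧ E s.1 s.2) ∧
      (∀ s ∈ F, ∀ t ∈ F, s ≠ t → s.1 ≠ t.1 ∧ s.2 ≠ t.2) := by
  intro k
  induction k with
  | zero =>
    intro m L R _ hL _ _
    exact ⟨∅, rfl, by simp, by simp⟩
  | succ n ih =>
    intro m L R hkm hL hinj hcount
    have hLne : L.Nonempty := by rw [← card_pos, hL]; omega
    obtain ⟨u₀, hu₀, hmin⟩ := Finset.exists_min_image L κ hLne
    have hfe : L.filter (fun w => κ u₀ < κ w) = L.erase u₀ := by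
      ext w
      simp only [mem_filter, mem_erase]
      constructor
      · rintro ⟨hwL, hlt⟩
        exact ⟨fun h => by subst h; exact lt_irrefl _ hlt, hwL⟩
      · rintro ⟨hne, hwL⟩
        refine ⟨hwL, lt_of_le_of_ne (hmin w hwL) ?_⟩
        intro heq
        exact hne (hinj hwL hu₀ heq.symm)
    have hcard_erase : (L.erase u₀).card = n := by
      rw [card_erase_of_mem hu₀, hL]; omega
    have hcnt := hcount u₀ hu₀
    rw [hfe, hcard_erase] at hcnt
    have hRpos : 0 < (R.filter (fun v => E u₀ v)).card := by omega
    obtain ⟨v₀, hv₀⟩ := card_pos.mp hRpos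
    rw [mem_filter] at hv₀
    -- recurse
    have hstep : ∀ u ∈ L.erase u₀,
        m - 1 ≤ ((L.erase u₀).filter (fun w => κ u < κ w)).card
          + ((R.erase v₀).filter (fun v => E u v)).card := by
      intro u hu
      rw [mem_erase] at hu
      have h1 : (L.erase u₀).filter (fun w => κ u < κ w) = L.filter (fun w => κ u < κ w) := by
        rw [filter_erase]
        apply erase_eq_of_notMem
        simp only [mem_filter, not_and]
        intro _
        have h2 : κ u₀ ≤ κ u := hmin u hu.2
        have h3 : κ u₀ ≠ κ u := fun heq => hu.1 (hinj hu.2 hu₀ heq.symm)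
        push_neg
        exact le_of_lt (lt_of_le_of_ne h2 h3)
      have h4 : (R.filter (fun v => E u v)).card - 1 ≤
          ((R.erase v₀).filter (fun v => E u v)).card := by
        rw [filter_erase]
        have := Finset.pred_card_le_card_erase (s := R.filter (fun v => E u v)) (a := v₀)
        exact this
      have h5 := hcount u hu.2
      rw [h1]
      omega
    obtain ⟨F', hF'card, hF'mem, hF'dist⟩ := ih (m - 1) (L.erase u₀) (R.erase v₀)
      (by omega) hcard_erase (hinj.mono (by simp [Finset.coe_subset, erase_subset])) hstep
    have hnotmem : (u₀, v₀) ∉ F' := by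
      intro hmem
      have := (hF'mem _ hmem).1
      simp only [mem_erase] at this
      exact this.1 rfl
    refine ⟨insert (u₀, v₀) F', ?_, ?_, ?_⟩
    · rw [card_insert_of_notMem hnotmem, hF'card]
    · intro s hs
      rcases mem_insert.mp hs with rfl | hsF
      · exact ⟨hu₀, hv₀.1, hv₀.2⟩
      · obtain ⟨h1, h2, h3⟩ := hF'mem s hsF
        exact ⟨mem_of_mem_erase h1, mem_of_mem_erase h2, h3⟩
    · intro s hs t ht hst
      rcases mem_insert.mp hs with rfl | hsF <;> rcases mem_insert.mp ht with rfl | htF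
      · exact absurd rfl hst
      · obtain ⟨h1, h2, _⟩ := hF'mem t htF
        rw [mem_erase] at h1 h2
        exact ⟨fun h => h1.1 h.symm, fun h => h2.1 h.symm⟩
      · obtain ⟨h1, h2, _⟩ := hF'mem s hsF
        rw [mem_erase] at h1 h2
        exact ⟨h1.1, h2.1⟩
      · exact hF'dist s hsF t htF hst



lemma halfplane_count (P : Finset (ℝ × ℝ)) (p : ℝ × ℝ) (hp : p ∈ P) (d : ℕ)
    (hd₂ : ∀ S ⊆ P.erase p,
           p ∈ frontier (convexHull ℝ (↑(P \ S) : Set (ℝ × ℝ))) → d ≤ S.card)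
    (w : ℝ × ℝ) (hw : w ≠ 0) :
    d ≤ (P.filter (fun q => 0 < cr w (q - p))).card := by
  classical
  set S := P.filter (fun q => 0 < cr w (q - p)) with hS
  have hpS : p ∉ S := by
    rw [hS, mem_filter]
    rintro ⟨-, hpos⟩
    simp [cr] at hpos
  apply hd₂
  · intro q hq
    rw [hS, mem_filter] at hq
    rw [mem_erase]
    refine ⟨?_, hq.1⟩
    rintro rfl
    exact hpS (by rw [hS, mem_filter]; exact hq)
  · have hfr : frontier (convexHull ℝ (↑(P \ S) : Set (ℝ × ℝ)))
        = closure (convexHull ℝ (↑(P \ S) : Set (ℝ × ℝ)))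
          \ interior (convexHull ℝ (↑(P \ S) : Set (ℝ × ℝ))) := rfl
    rw [hfr, Set.mem_diff]
    have hpmem : p ∈ (↑(P \ S) : Set (ℝ × ℝ)) := by
      rw [Finset.coe_sdiff]
      exact ⟨hp, hpS⟩
    constructor
    · exact subset_closure (subset_convexHull ℝ _ hpmem)
    · -- p not in interior
      intro hint
      have hlin : IsLinearMap ℝ (fun x : ℝ × ℝ => cr w x) := by
        constructor
        · intro x y; simp [cr]; ring
        · intro c x; simp [cr, Prod.smul_fst, Prod.smul_snd, smul_eq_mul]; ring
      have hhull : convexHull ℝ (↑(P \ S) : Set (ℝ × ℝ)) ⊆ {x | cr w x ≤ cr w p} := by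
        apply convexHull_min
        · intro q hq
          rw [Finset.coe_sdiff] at hq
          obtain ⟨hqP, hqS⟩ := hq
          have : ¬ (0 < cr w (q - p)) := by
            intro hpos
            exact hqS (Finset.mem_coe.mpr
              (by rw [hS, mem_filter]; exact ⟨Finset.mem_coe.mp hqP, hpos⟩))
          have hsub : cr w (q - p) = cr w q - cr w p := by simp [cr]; ring
          rw [hsub] at this
          simp only [Set.mem_setOf_eq]
          linarith
        · exact convex_halfSpace_le hlin _
      obtain ⟨ε, hε, hball⟩ := Metric.isOpen_iff.mp isOpen_interior p hint
      set z : ℝ × ℝ := (-w.2, w.1) with hz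
      have hcrz : 0 < cr w z := by
        have : cr w z = dt w w := by simp only [cr, dt, hz]; ring
        rw [this]; exact dt_pos hw
      set t : ℝ := ε / (2 * (‖z‖ + 1)) with htdef
      have hnz : (0:ℝ) < ‖z‖ + 1 := by positivity
      have ht : 0 < t := by positivity
      have hmem2 : p + t • z ∈ Metric.ball p ε := by
        rw [Metric.mem_ball, dist_eq_norm]
        have : p + t • z - p = t • z := by abel
        rw [this, norm_smul, Real.norm_eq_abs, abs_of_pos ht]
        rw [htdef]
        rw [div_mul_eq_mul_div, div_lt_iff₀ (by positivity)]
        nlinarith [norm_nonneg z]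
      have hC : p + t • z ∈ {x | cr w x ≤ cr w p} :=
        hhull (interior_subset (hball hmem2))
      simp only [Set.mem_setOf_eq] at hC
      have hexp : cr w (p + t • z) = cr w p + t * cr w z := by
        simp [cr, Prod.smul_fst, Prod.smul_snd, smul_eq_mul]; ring
      rw [hexp] at hC
      nlinarith


end Stmt13Aux


open Stmt13Aux

theorem stmt_13 (P : Finset (ℝ × ℝ)) (p : ℝ × ℝ) (hp : p ∈ P)
    (hgen : ∀ x ∈ P, ∀ y ∈ P, ∀ z ∈ P,
            x ≠ y → x ≠ z → y ≠ z → ¬ Collinear ℝ ({x, y, z} : Set (ℝ × ℝ)))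
    (d : ℕ) (hd : 1 ≤ d)
    (hd₁ : ∃ S ⊆ P.erase p, S.card = d ∧
           p ∈ frontier (convexHull ℝ (↑(P \ S) : Set (ℝ × ℝ))))
    (hd₂ : ∀ S ⊆ P.erase p,
           p ∈ frontier (convexHull ℝ (↑(P \ S) : Set (ℝ × ℝ))) → d ≤ S.card) :
    ∃ M : Finset ((ℝ × ℝ) × (ℝ × ℝ)), M.card = d ∧
      (∀ s ∈ M, s.1 ∈ P ∧ s.2 ∈ P ∧ s.1 ≠ s.2) ∧
      (∀ s ∈ M, ∀ t ∈ M, s ≠ t →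
        ({s.1, s.2} : Set (ℝ × ℝ)) ∩ ({t.1, t.2} : Set (ℝ × ℝ)) = ∅) ∧
      IsConnected (⋃ s ∈ M, segment ℝ s.1 s.2) := by
  classical
  have hcount : ∀ w : ℝ × ℝ, w ≠ 0 →
      d ≤ (P.filter (fun q => 0 < cr w (q - p))).card :=
    fun w hw => Stmt13Aux.halfplane_count P p hp d hd₂ w hw
  -- P.erase p is nonempty
  have hne : (P.erase p).Nonempty := by
    have h1 : d ≤ (P.filter (fun q => 0 < cr ((1:ℝ),(0:ℝ)) (q - p))).card :=
      hcount (1,0) (by simp [Prod.ext_iff])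
    have h2 : (P.filter (fun q => 0 < cr ((1:ℝ),(0:ℝ)) (q - p))) ⊆ P.erase p := by
      intro q hq
      rw [mem_filter] at hq
      rw [mem_erase]
      refine ⟨?_, hq.1⟩
      rintro rfl
      simp [cr, sub_self] at hq
    have := card_le_card h2
    rw [← card_pos]
    omega
  obtain ⟨b, hb, hbmax⟩ := Finset.exists_max_image (P.erase p) (fun q => dt (q - p) (q - p)) hne
  rw [mem_erase] at hb
  obtain ⟨hbp, hbP⟩ := hb
  have hbp0 : b - p ≠ 0 := sub_ne_zero.mpr hbp
  have hdtb : 0 < dt (b - p) (b - p) := dt_pos hbp0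
  -- left and right sets
  set Lset := P.filter (fun q => 0 < cr (b - p) (q - p)) with hLdef
  set Rset := P.filter (fun q => cr (b - p) (q - p) < 0) with hRdef
  have hLd : d ≤ Lset.card := hcount (b - p) hbp0
  have hRd : d ≤ Rset.card := by
    have h1 : d ≤ (P.filter (fun q => 0 < cr (p - b) (q - p))).card :=
      hcount (p - b) (by rw [sub_ne_zero]; exact fun h => hbp h.symm)
    have h2 : P.filter (fun q => 0 < cr (p - b) (q - p)) = Rset := by
      apply filter_congr
      intro q _
      constructor <;> intro h
      · have : cr (p - b) (q - p) = - cr (b - p) (q - p) := by simp [cr]; ring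
        rw [this] at h; linarith
      · have : cr (p - b) (q - p) = - cr (b - p) (q - p) := by simp [cr]; ring
        rw [this]; linarith
    rwa [h2] at h1
  -- basic membership facts
  have hpL : p ∉ Lset := by rw [hLdef, mem_filter]; rintro ⟨-, h⟩; simp [cr] at h
  have hpR : p ∉ Rset := by rw [hRdef, mem_filter]; rintro ⟨-, h⟩; simp [cr] at h
  have hbL : b ∉ Lset := by
    rw [hLdef, mem_filter]; rintro ⟨-, h⟩
    have : cr (b - p) (b - p) = 0 := by simp [cr]; ring
    rw [this] at h; exact lt_irrefl _ h
  have hbR : b ∉ Rset := by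
    rw [hRdef, mem_filter]; rintro ⟨-, h⟩
    have : cr (b - p) (b - p) = 0 := by simp [cr]; ring
    rw [this] at h; exact lt_irrefl _ h
  have hLP : Lset ⊆ P := filter_subset _ _
  have hRP : Rset ⊆ P := filter_subset _ _
  have hLnp : ∀ u ∈ Lset, u ≠ p := fun u hu h => hpL (h ▸ hu)
  have hRnp : ∀ v ∈ Rset, v ≠ p := fun v hv h => hpR (h ▸ hv)
  have hLR : ∀ u ∈ Lset, ∀ v ∈ Rset, u ≠ v := by
    intro u hu v hv h
    rw [hLdef, mem_filter] at hu
    rw [hRdef, mem_filter] at hv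
    subst h
    linarith [hu.2, hv.2]
  -- general position: nonzero cross products
  have hcr_ne : ∀ x ∈ P, ∀ y ∈ P, x ≠ p → y ≠ p → x ≠ y →
      cr (x - p) (y - p) ≠ 0 := by
    intro x hx y hy hxp hyp hxy h0
    exact hgen p hp x hx y hy (fun h => hxp h.symm) (fun h => hyp h.symm) hxy
      (Stmt13Aux.collinear_of_cr hxp h0)
  -- the angular order key on Lset
  set κ : ℝ × ℝ → ℝ := fun u => dt (u - p) (b - p) / cr (b - p) (u - p) with hκdef
  have hκlt : ∀ u ∈ Lset, ∀ w ∈ Lset, (κ u < κ w ↔ 0 < cr (w - p) (u - p)) := by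
    intro u hu w hw
    rw [hLdef, mem_filter] at hu hw
    have hDu : 0 < cr (b - p) (u - p) := hu.2
    have hDw : 0 < cr (b - p) (w - p) := hw.2
    have hident : dt (w - p) (b - p) * cr (b - p) (u - p)
        - dt (u - p) (b - p) * cr (b - p) (w - p)
        = dt (b - p) (b - p) * cr (w - p) (u - p) := by
      simp only [cr, dt]; ring
    rw [hκdef]
    simp only
    rw [div_lt_div_iff₀ hDu hDw]
    constructor
    · intro h
      have h2 : 0 < dt (b - p) (b - p) * cr (w - p) (u - p) := by nlinarith
      exact pos_cancel hdtb h2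
    · intro h
      nlinarith [mul_pos hdtb h]
  have hκinj : Set.InjOn κ ↑Lset := by
    intro u hu w hw heq
    by_contra hne'
    have h1 : ¬ (0 < cr (w - p) (u - p)) := by
      rw [← hκlt u (Finset.mem_coe.mp hu) w (Finset.mem_coe.mp hw)]
      rw [heq]; exact lt_irrefl _
    have h2 : ¬ (0 < cr (u - p) (w - p)) := by
      rw [← hκlt w (Finset.mem_coe.mp hw) u (Finset.mem_coe.mp hu)]
      rw [heq]; exact lt_irrefl _
    have h3 : cr (u - p) (w - p) = - cr (w - p) (u - p) := by simp [cr]; ring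
    have h4 : cr (w - p) (u - p) = 0 := by
      rw [h3] at h2
      push_neg at h1 h2
      linarith
    have huL := Finset.mem_coe.mp hu
    have hwL := Finset.mem_coe.mp hw
    exact hcr_ne w (hLP hwL) u (hLP huL) (hLnp w hwL) (hLnp u huL)
      (fun h => hne' h.symm) h4
  -- extract the top d-1 elements of Lset in κ order
  obtain ⟨L₀, hL₀S, hL₀card, hL₀closed⟩ :=
    Stmt13Aux.exists_top_segment κ (d - 1) Lset (by omega) hκinj
  -- the count hypothesis for matching
  have hcountL : ∀ u ∈ L₀,
      d - 1 ≤ (L₀.filter (fun w => κ u < κ w)).card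
        + (Rset.filter (fun v => 0 < cr (v - p) (u - p))).card := by
    intro u huL₀
    have huL : u ∈ Lset := hL₀S huL₀
    have huP : u ∈ P := hLP huL
    have hup : u ≠ p := hLnp u huL
    have hH : d ≤ (P.filter (fun q => 0 < cr (q - p) (u - p))).card := by
      have h1 := hcount (p - u) (by rw [sub_ne_zero]; exact fun h => hup h.symm)
      have h2 : P.filter (fun q => 0 < cr (p - u) (q - p))
          = P.filter (fun q => 0 < cr (q - p) (u - p)) := by
        apply filter_congr
        intro q _
        have : cr (p - u) (q - p) = cr (q - p) (u - p) := by simp [cr]; ring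
        rw [this]
      rwa [h2] at h1
    have hsub : P.filter (fun q => 0 < cr (q - p) (u - p))
        ⊆ insert b ((L₀.filter (fun w => κ u < κ w))
            ∪ (Rset.filter (fun v => 0 < cr (v - p) (u - p)))) := by
      intro q hq
      rw [mem_filter] at hq
      obtain ⟨hqP, hqpos⟩ := hq
      have hqp : q ≠ p := by
        rintro rfl
        simp [cr, sub_self] at hqpos
      by_cases hqb : q = b
      · rw [hqb]; exact mem_insert_self _ _
      · apply mem_insert_of_mem
        have hcrbq : cr (b - p) (q - p) ≠ 0 :=
          hcr_ne b hbP q hqP hbp hqp (fun h => hqb h.symm)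
        rcases lt_or_gt_of_ne hcrbq with hneg | hpos
        · apply mem_union_right
          rw [mem_filter]
          exact ⟨by rw [hRdef, mem_filter]; exact ⟨hqP, hneg⟩, hqpos⟩
        · apply mem_union_left
          have hqL : q ∈ Lset := by rw [hLdef, mem_filter]; exact ⟨hqP, hpos⟩
          have hklt : κ u < κ q := (hκlt u huL q hqL).mpr hqpos
          have hqL₀ : q ∈ L₀ := hL₀closed u huL₀ q hqL hklt
          rw [mem_filter]
          exact ⟨hqL₀, hklt⟩
    have hcard := card_le_card hsub
    have h3 := card_insert_le b ((L₀.filter (fun w => κ u < κ w))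
        ∪ (Rset.filter (fun v => 0 < cr (v - p) (u - p))))
    have h4 := card_union_le (L₀.filter (fun w => κ u < κ w))
        (Rset.filter (fun v => 0 < cr (v - p) (u - p)))
    omega
  -- get the matching
  obtain ⟨F, hFcard, hFmem, hFdist⟩ :=
    Stmt13Aux.exists_matching κ (fun u v => 0 < cr (v - p) (u - p))
      (d - 1) (d - 1) L₀ Rset le_rfl hL₀card (hκinj.mono (by exact_mod_cast hL₀S)) hcountL
  -- the final matching
  have hpbF : (p, b) ∉ F := by
    intro h
    have := (hFmem _ h).1
    exact hpL (hL₀S this)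
  refine ⟨insert (p, b) F, ?_, ?_, ?_, ?_⟩
  · rw [card_insert_of_notMem hpbF, hFcard]; omega
  · intro s hs
    rcases mem_insert.mp hs with rfl | hsF
    · exact ⟨hp, hbP, fun h => hbp h.symm⟩
    · obtain ⟨h1, h2, _⟩ := hFmem s hsF
      have h1' : s.1 ∈ Lset := hL₀S h1
      exact ⟨hLP h1', hRP h2, hLR _ h1' _ h2⟩
  · -- disjoint endpoints
    intro s hs t ht hst
    rw [Set.eq_empty_iff_forall_notMem]
    intro x hx
    obtain ⟨hx1, hx2⟩ := hx
    simp only [Set.mem_insert_iff, Set.mem_singleton_iff] at hx1 hx2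
    have key : ∀ s' t' : (ℝ × ℝ) × (ℝ × ℝ), s' ∈ insert (p, b) F → t' ∈ insert (p, b) F →
        s' ≠ t' → s'.1 ≠ t'.1 ∧ s'.1 ≠ t'.2 ∧ s'.2 ≠ t'.1 ∧ s'.2 ≠ t'.2 := by
      intro s' t' hs' ht' hst'
      rcases mem_insert.mp hs' with rfl | hsF' <;> rcases mem_insert.mp ht' with rfl | htF'
      · exact absurd rfl hst'
      · obtain ⟨h1, h2, _⟩ := hFmem t' htF'
        have h1' : t'.1 ∈ Lset := hL₀S h1
        refine ⟨fun h => ?_, fun h => ?_, fun h => ?_, fun h => ?_⟩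
        · have h' : p = t'.1 := h
          rw [← h'] at h1'; exact hpL h1'
        · have h' : p = t'.2 := h
          rw [← h'] at h2; exact hpR h2
        · have h' : b = t'.1 := h
          rw [← h'] at h1'; exact hbL h1'
        · have h' : b = t'.2 := h
          rw [← h'] at h2; exact hbR h2
      · obtain ⟨h1, h2, _⟩ := hFmem s' hsF'
        have h1' : s'.1 ∈ Lset := hL₀S h1
        refine ⟨fun h => ?_, fun h => ?_, fun h => ?_, fun h => ?_⟩
        · have h' : s'.1 = p := h
          rw [h'] at h1'; exact hpL h1'
        · have h' : s'.1 = b := h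
          rw [h'] at h1'; exact hbL h1'
        · have h' : s'.2 = p := h
          rw [h'] at h2; exact hpR h2
        · have h' : s'.2 = b := h
          rw [h'] at h2; exact hbR h2
      · obtain ⟨ha, hb'⟩ := hFdist s' hsF' t' htF' hst'
        obtain ⟨hs1, hs2, _⟩ := hFmem s' hsF'
        obtain ⟨ht1, ht2, _⟩ := hFmem t' htF'
        exact ⟨ha, hLR _ (hL₀S hs1) _ ht2, fun h => (hLR _ (hL₀S ht1) _ hs2) h.symm, hb'⟩
    obtain ⟨k1, k2, k3, k4⟩ := key s t hs ht hst
    rcases hx1 with rfl | rfl <;> rcases hx2 with h | h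
    · exact k1 h
    · exact k2 h
    · exact k3 h
    · exact k4 h
  · -- connectivity
    have hmeet : ∀ s ∈ F, (segment ℝ s.1 s.2 ∩ segment ℝ p b).Nonempty := by
      intro s hsF
      obtain ⟨h1, h2, hE⟩ := hFmem s hsF
      have h1' : s.1 ∈ Lset := hL₀S h1
      rw [hLdef, mem_filter] at h1'
      rw [hRdef, mem_filter] at h2
      have hu1 : s.1 ∈ P.erase p := by
        rw [mem_erase]
        exact ⟨hLnp _ (hL₀S h1), h1'.1⟩
      have hu2 : s.2 ∈ P.erase p := by
        rw [mem_erase]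
        exact ⟨hRnp _ (by rw [hRdef, mem_filter]; exact h2), h2.1⟩
      exact Stmt13Aux.seg_meet h1'.2 h2.2 hE (hbmax s.1 hu1) (hbmax s.2 hu2)
    set U := ⋃ s ∈ insert (p, b) F, segment ℝ s.1 s.2 with hUdef
    have hpU : p ∈ U := by
      rw [hUdef]
      exact Set.mem_iUnion₂.mpr ⟨(p, b), mem_insert_self (p, b) F, left_mem_segment ℝ p b⟩
    constructor
    · exact ⟨p, hpU⟩
    · set c : Set (Set (ℝ × ℝ)) :=
        (fun s : (ℝ × ℝ) × (ℝ × ℝ) => segment ℝ s.1 s.2 ∪ segment ℝ p b) '' ↑(insert (p, b) F)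
        with hcdef
      have hUeq : ⋃₀ c = U := by
        rw [hcdef, Set.sUnion_image, hUdef]
        apply Set.Subset.antisymm
        · intro x hx
          rw [Set.mem_iUnion₂] at hx
          obtain ⟨s, hs, hx⟩ := hx
          rw [Finset.mem_coe] at hs
          rcases hx with hx | hx
          · exact Set.mem_iUnion₂.mpr ⟨s, hs, hx⟩
          · exact Set.mem_iUnion₂.mpr ⟨(p, b), mem_insert_self (p, b) F, hx⟩
        · intro x hx
          rw [Set.mem_iUnion₂] at hx
          obtain ⟨s, hs, hx⟩ := hx
          exact Set.mem_iUnion₂.mpr ⟨s, Finset.mem_coe.mpr hs, Or.inl hx⟩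
      rw [← hUeq]
      apply isPreconnected_sUnion p c
      · rintro S ⟨s, hs, rfl⟩
        exact Or.inr (left_mem_segment ℝ p b)
      · rintro S ⟨s, hs, rfl⟩
        rw [Finset.mem_coe] at hs
        rcases mem_insert.mp hs with rfl | hsF
        · simp only [Set.union_self]
          exact (convex_segment _ _).isPreconnected
        · obtain ⟨x, hx1, hx2⟩ := hmeet s hsF
          exact IsPreconnected.union x hx1 hx2
            (convex_segment _ _).isPreconnected (convex_segment _ _).isPreconnected
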